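/- Let n = p_1 ⋯ p_r be a squarefree product of distinct odd primes. Let x_1, ..., x_m be pairwise distinct elements of Z_n with m ≥ 2, where each x_i = u_i · ∏_{j ∈ A_i} p_j for some unit u_i ∈ Z_n^* and subset A_i ⊆ {1,...,r}. Suppose that for each i, ⋂_{j ≠ i} A_j = ∅. Then there exist units a_1, ..., a_m ∈ Z_n^* with ∑_{i=1}^m a_i x_i = 0 in Z_n. -/

import Mathlib

lemma two_avoid_aux {F : Type*} [Field F] [Fintype F] (h3 : 3 ≤ Fintype.card F)
    (A B c : F) (hA : A ≠ 0) (hB : B ≠ 0) :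
    ∃ a b : F, a ≠ 0 ∧ b ≠ 0 ∧ a * A + b * B = c := by
  classical
  obtain ⟨z, hz0, hzc⟩ : ∃ z : F, z ≠ 0 ∧ z ≠ c := by
    by_contra h
    push_neg at h
    have hsub : (Finset.univ : Finset F) ⊆ {0, c} := by
      intro z _
      rcases eq_or_ne z 0 with h0 | h0
      · simp [h0]
      · simp [h z h0]
    have := Finset.card_le_card hsub
    rw [Finset.card_univ] at this
    have h2 : ({0, c} : Finset F).card ≤ 2 := Finset.card_insert_le _ _ |>.trans (by simp)
    omega
  refine ⟨z * A⁻¹, (c - z) * B⁻¹, ?_, ?_, ?_⟩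
  · exact mul_ne_zero hz0 (inv_ne_zero hA)
  · exact mul_ne_zero (sub_ne_zero.2 (Ne.symm hzc)) (inv_ne_zero hB)
  · field_simp
    ring

theorem exists_unit_weights_zero_sum (r : ℕ) (p : Fin r → ℕ)
    (hp : ∀ i, (p i).Prime) (hodd : ∀ i, Odd (p i)) (hinj : Function.Injective p)
    (n : ℕ) (hn : n = ∏ i, p i) (m : ℕ) (hm : 2 ≤ m)
    (x : Fin m → ZMod n) (hx : Function.Injective x)
    (u : Fin m → ZMod n) (hu : ∀ i, IsUnit (u i))
    (A : Fin m → Finset (Fin r))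
    (hxA : ∀ i, x i = u i * ∏ j ∈ A i, (p j : ZMod n))
    (hcap : ∀ i : Fin m, ∀ t : Fin r, ¬ ∀ j : Fin m, j ≠ i → t ∈ A j) :
    ∃ a : Fin m → ZMod n, (∀ i, IsUnit (a i)) ∧ ∑ i, a i * x i = 0 := by
  classical
  subst hn
  have hcop : Pairwise (Function.onFun Nat.Coprime p) := fun i j hij =>
    (Nat.coprime_primes (hp i) (hp j)).2 fun h => hij (hinj h)
  have hdvd : ∀ t : Fin r, p t ∣ ∏ i, p i := fun t =>
    Finset.dvd_prod_of_mem p (Finset.mem_univ t)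
  haveI : ∀ t : Fin r, Fact (p t).Prime := fun t => ⟨hp t⟩
  set e := ZMod.prodEquivPi p hcop with he
  have hcomp : ∀ (z : ZMod (∏ i, p i)) (t : Fin r),
      e z t = ZMod.castHom (hdvd t) (ZMod (p t)) z := by
    intro z t
    have h := RingHom.ext_zmod
      ((Pi.evalRingHom (fun t => ZMod (p t)) t).comp (e : ZMod (∏ i, p i) →+* Π t, ZMod (p t)))
      (ZMod.castHom (hdvd t) (ZMod (p t)))
    exact RingHom.congr_fun h z
  -- key per-prime construction
  have key : ∀ t : Fin r, ∃ v : Fin m → ZMod (p t), (∀ i, v i ≠ 0) ∧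
      ∑ i, v i * ZMod.castHom (hdvd t) (ZMod (p t)) (x i) = 0 := by
    intro t
    set y : Fin m → ZMod (p t) := fun i => ZMod.castHom (hdvd t) (ZMod (p t)) (x i) with hy
    have hynz : ∀ j, t ∉ A j → y j ≠ 0 := by
      intro j hj
      rw [hy]
      simp only [hxA j, map_mul, map_prod, map_natCast]
      apply mul_ne_zero
      · exact ((hu j).map (ZMod.castHom (hdvd t) (ZMod (p t)))).ne_zero
      · rw [Finset.prod_ne_zero_iff]
        intro k hk h0
        have hkt : k ≠ t := fun h => hj (h ▸ hk)
        have hd := (ZMod.natCast_eq_zero_iff _ _).1 h0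
        exact hkt (hinj ((Nat.prime_dvd_prime_iff_eq (hp t) (hp k)).1 hd)).symm
    -- find two distinct indices with t ∉ A j
    have i0 : Fin m := ⟨0, by omega⟩
    obtain ⟨j1, hj1i, hj1⟩ : ∃ j, j ≠ i0 ∧ t ∉ A j := by
      have := hcap i0 t; push_neg at this; exact this
    obtain ⟨j2, hj2j1, hj2⟩ : ∃ j, j ≠ j1 ∧ t ∉ A j := by
      have := hcap j1 t; push_neg at this; exact this
    have hcard : 3 ≤ Fintype.card (ZMod (p t)) := by
      rw [ZMod.card]
      have h2 := (hp t).two_le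
      have := (hodd t)
      rw [Nat.odd_iff] at this
      omega
    obtain ⟨a, b, ha, hb, hab⟩ := two_avoid_aux hcard (y j1) (y j2)
      (-(∑ i ∈ Finset.univ \ {j1, j2}, y i)) (hynz _ hj1) (hynz _ hj2)
    refine ⟨fun i => if i = j1 then a else if i = j2 then b else 1, ?_, ?_⟩
    · intro i
      dsimp only
      split_ifs with h1 h2
      · exact ha
      · exact hb
      · exact one_ne_zero
    · have hsub : ({j1, j2} : Finset (Fin m)) ⊆ Finset.univ := Finset.subset_univ _
      rw [← Finset.sum_sdiff hsub]
      have h1 : ∑ i ∈ Finset.univ \ {j1, j2},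
          (if i = j1 then a else if i = j2 then b else 1) * y i
          = ∑ i ∈ Finset.univ \ {j1, j2}, y i := by
        apply Finset.sum_congr rfl
        intro i hi
        simp only [Finset.mem_sdiff, Finset.mem_insert, Finset.mem_singleton] at hi
        push_neg at hi
        rw [if_neg hi.2.1, if_neg hi.2.2, one_mul]
      rw [h1, Finset.sum_pair (Ne.symm hj2j1)]
      dsimp only
      rw [if_pos rfl, if_neg hj2j1, if_pos rfl]
      rw [show ZMod.castHom (hdvd t) (ZMod (p t)) (x j1) = y j1 from rfl,
        show ZMod.castHom (hdvd t) (ZMod (p t)) (x j2) = y j2 from rfl, hab]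
      ring
  choose v hv1 hv2 using key
  refine ⟨fun i => e.symm (fun t => v t i), ?_, ?_⟩
  · intro i
    have hw : IsUnit (fun t => v t i : Π t, ZMod (p t)) := by
      refine isUnit_iff_exists_inv.2 ⟨fun t => (v t i)⁻¹, ?_⟩
      funext t
      exact mul_inv_cancel₀ (hv1 t i)
    exact hw.map (e.symm : (Π t, ZMod (p t)) →+* ZMod (∏ i, p i))
  · apply e.injective
    rw [map_zero, map_sum]
    funext t
    rw [Finset.sum_apply]
    have : ∀ i, (e ((e.symm fun t => v t i) * x i)) t
        = v t i * ZMod.castHom (hdvd t) (ZMod (p t)) (x i) := by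
      intro i
      rw [map_mul, Pi.mul_apply, RingEquiv.apply_symm_apply, hcomp]
    simp only [this]
    exact hv2 t
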